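/- Given monoids H and N and a weakly Schreier datum (∼, φ, χ), the multiplication (h, [n]) · (h', [n']) := (h h', [n · φ(h,n') · χ(h,h')]) on the set of pairs (h, x) with h ∈ H and x ∈ N/∼ʰ is well-defined (independent of the representatives n, n'), associative, and has (1, [1]) as a two-sided unit, making this set into a monoid G(∼,φ,χ). -/

import Mathlib

/-- A weakly Schreier datum `(∼, φ, χ)` for monoids `H` and `N`: a family of
equivalence relations `∼ʰ` on `N` indexed by `h ∈ H` together with functions
`φ : H × N → N` and `χ : H × H → N` satisfying conditions (i)–(x). -/
structure WeaklySchreierDatum (H N : Type*) [Monoid H] [Monoid N] where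
  sim : H → N → N → Prop
  /-- each `∼ʰ` is an equivalence relation -/
  equiv : ∀ h : H, Equivalence (sim h)
  /-- (i) each `∼ʰ` is a left congruence -/
  left_cong : ∀ (h : H) (n n₁ n₂ : N), sim h n₁ n₂ → sim h (n * n₁) (n * n₂)
  /-- (ii) `∼¹` is equality -/
  sim_one : ∀ n₁ n₂ : N, sim 1 n₁ n₂ ↔ n₁ = n₂
  phi : H → N → N
  chi : H → H → N
  /-- (iii) `φ(1,n) = n` -/
  one_phi : ∀ n : N, phi 1 n = n
  /-- (iv) `φ(h,1) ∼ʰ 1` -/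
  phi_one : ∀ h : H, sim h (phi h 1) 1
  /-- (v) `φ(h, n n') ∼ʰ φ(h,n) φ(h,n')` -/
  phi_mul : ∀ (h : H) (n n' : N), sim h (phi h (n * n')) (phi h n * phi h n')
  /-- (vi) `φ(h, φ(h',n)) χ(h,h') ∼^{h h'} χ(h,h') φ(h h', n)` -/
  compat : ∀ (h h' : H) (n : N),
    sim (h * h') (phi h (phi h' n) * chi h h') (chi h h' * phi (h * h') n)
  /-- (vii) the combined congruence condition for the multiplication -/
  mul_cong : ∀ (h h' : H) (n₁ n₂ n'₁ n'₂ : N),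
    sim h n₁ n₂ → sim h' n'₁ n'₂ →
      sim (h * h') (n₁ * phi h n'₁ * chi h h') (n₂ * phi h n'₂ * chi h h')
  /-- (viii) `n₁ ∼ʰ n₂` implies `n₁ χ(h,h') ∼^{h h'} n₂ χ(h,h')` -/
  chi_cong : ∀ (h h' : H) (n₁ n₂ : N),
    sim h n₁ n₂ → sim (h * h') (n₁ * chi h h') (n₂ * chi h h')
  /-- (ix) `χ(1,h) ∼ʰ 1` and `χ(h,1) ∼ʰ 1` -/
  chi_one_left : ∀ h : H, sim h (chi 1 h) 1
  chi_one_right : ∀ h : H, sim h (chi h 1) 1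
  /-- (x) the cocycle condition -/
  cocycle : ∀ x y z : H,
    sim (x * y * z) (chi x y * chi (x * y) z) (phi x (chi y z) * chi x (y * z))

variable {H N : Type*} [Monoid H] [Monoid N]

/-- The underlying set of `G(∼,φ,χ)`: pairs `(h, [n])` with `h ∈ H` and
`[n] ∈ N/∼ʰ`. -/
def WSProd (D : WeaklySchreierDatum H N) : Type _ :=
  (h : H) × Quot (D.sim h)

/-- The multiplication `(h,[n]) · (h',[n']) = (h h', [n φ(h,n') χ(h,h')])` on
`G(∼,φ,χ)`; it is well defined by condition (vii). -/
def wsMul (D : WeaklySchreierDatum H N) (p q : WSProd D) : WSProd D :=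
  ⟨p.1 * q.1,
    Quot.lift₂
      (fun n n' => Quot.mk (D.sim (p.1 * q.1)) (n * D.phi p.1 n' * D.chi p.1 q.1))
      (fun n n'₁ n'₂ hsim => Quot.sound
        (D.mul_cong p.1 q.1 n n n'₁ n'₂ ((D.equiv p.1).refl n) hsim))
      (fun n₁ n₂ n' hsim => Quot.sound
        (D.mul_cong p.1 q.1 n₁ n₂ n' n' hsim ((D.equiv q.1).refl n')))
      p.2 q.2⟩

/-- The unit `(1, [1])` of `G(∼,φ,χ)`. -/
def wsOne (D : WeaklySchreierDatum H N) : WSProd D :=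
  ⟨1, Quot.mk (D.sim 1) 1⟩


private lemma ws_ext (D : WeaklySchreierDatum H N) {h₁ h₂ : H} (e : h₁ = h₂)
    {n₁ n₂ : N} (hs : D.sim h₂ n₁ n₂) :
    (⟨h₁, Quot.mk (D.sim h₁) n₁⟩ : WSProd D) = ⟨h₂, Quot.mk (D.sim h₂) n₂⟩ := by
  subst e
  exact congrArg (fun x => (⟨h₁, x⟩ : WSProd D)) (Quot.sound hs)

/-- Given a weakly Schreier datum `(∼, φ, χ)`, the multiplication
`(h,[n]) · (h',[n']) = (h h', [n φ(h,n') χ(h,h')])` on pairs `(h, x)` with `h ∈ H`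
and `x ∈ N/∼ʰ` is well-defined (independent of the representatives), associative,
and has `(1, [1])` as a two-sided unit. -/
theorem wsMul_monoid (D : WeaklySchreierDatum H N) :
    ∃ mul : WSProd D → WSProd D → WSProd D,
      -- well-definedness: the multiplication is given on representatives by the formula
      (∀ (h h' : H) (n n' : N),
        mul ⟨h, Quot.mk (D.sim h) n⟩ ⟨h', Quot.mk (D.sim h') n'⟩ =
          ⟨h * h', Quot.mk (D.sim (h * h')) (n * D.phi h n' * D.chi h h')⟩) ∧
        -- associativity
        (∀ p q r : WSProd D, mul (mul p q) r = mul p (mul q r)) ∧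
        -- (1, [1]) is a two-sided unit
        (∀ p : WSProd D, mul (wsOne D) p = p) ∧
        (∀ p : WSProd D, mul p (wsOne D) = p) := by
  refine ⟨wsMul D, fun _ _ _ _ => rfl, ?_, ?_, ?_⟩
  · rintro ⟨h, x⟩ ⟨h', y⟩ ⟨h'', z⟩
    induction x using Quot.ind with | _ n =>
    induction y using Quot.ind with | _ n' =>
    induction z using Quot.ind with | _ n'' =>
    show (⟨h * h' * h'', _⟩ : WSProd D) = ⟨h * (h' * h''), _⟩
    refine ws_ext D (mul_assoc h h' h'') ?_
    have eK : h * (h' * h'') = h * h' * h'' := (mul_assoc h h' h'').symm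
    have c1 : D.sim (h * h' * h'')
        (D.phi h (n' * D.phi h' n'' * D.chi h' h'') * D.chi h (h' * h''))
        (D.phi h (n' * D.phi h' n'') * D.phi h (D.chi h' h'') * D.chi h (h' * h'')) :=
      eK ▸ D.chi_cong h (h' * h'') _ _ (D.phi_mul h _ _)
    have c2 : D.sim (h * h' * h'')
        (D.phi h (n' * D.phi h' n'') * D.phi h (D.chi h' h'') * D.chi h (h' * h''))
        (D.phi h n' * D.phi h (D.phi h' n'') * D.phi h (D.chi h' h'') * D.chi h (h' * h'')) :=
      eK ▸ D.mul_cong h (h' * h'') _ _ (D.chi h' h'') (D.chi h' h'')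
        (D.phi_mul h n' (D.phi h' n'')) ((D.equiv (h' * h'')).refl _)
    have c3 : D.sim (h * h' * h'')
        (D.phi h n' * D.phi h (D.phi h' n'') * (D.phi h (D.chi h' h'') * D.chi h (h' * h'')))
        (D.phi h n' * D.phi h (D.phi h' n'') * (D.chi h h' * D.chi (h * h') h'')) :=
      D.left_cong _ _ _ _ ((D.equiv _).symm (D.cocycle h h' h''))
    have c4 : D.sim (h * h' * h'')
        (D.phi h n' * (D.phi h (D.phi h' n'') * D.chi h h' * D.chi (h * h') h''))
        (D.phi h n' * (D.chi h h' * D.phi (h * h') n'' * D.chi (h * h') h'')) :=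
      D.left_cong _ _ _ _ (D.chi_cong (h * h') h'' _ _ (D.compat h h' n''))
    simp only [mul_assoc] at c1 c2 c3 c4 ⊢
    have E := D.equiv (h * (h' * h''))
    have chain := E.trans c1 (E.trans c2 (E.trans c3 c4))
    exact D.left_cong _ n _ _ (E.symm chain)
  · rintro ⟨h, x⟩
    induction x using Quot.ind with | _ n =>
    show (⟨1 * h, _⟩ : WSProd D) = ⟨h, Quot.mk (D.sim h) n⟩
    refine ws_ext D (one_mul h) ?_
    have h1 : D.sim h (n * D.chi 1 h) (n * 1) :=
      D.left_cong h n _ _ (D.chi_one_left h)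
    simpa [wsOne, D.one_phi] using h1
  · rintro ⟨h, x⟩
    induction x using Quot.ind with | _ n =>
    show (⟨h * 1, _⟩ : WSProd D) = ⟨h, Quot.mk (D.sim h) n⟩
    refine ws_ext D (mul_one h) ?_
    have e1 : h * 1 = h := mul_one h
    have h1 := D.left_cong (h * 1) n _ _ (D.chi_cong h 1 _ _ (D.phi_one h))
    rw [e1] at h1
    have h2 : D.sim h (n * D.chi h 1) (n * 1) :=
      D.left_cong h n _ _ (D.chi_one_right h)
    have E := D.equiv h
    simp only [one_mul, mul_one] at h1 h2
    simpa [mul_assoc, wsOne] using E.trans h1 h2
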